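/- For all positive integers k and n, one has k · (2·∫_0^1 log Γ(x)·sin(2π k n x) dx) = 2·∫_0^1 log Γ(x)·sin(2π n x) dx + log k/(π n); in other words, the sine Fourier coefficients b_m := 2·∫_0^1 log Γ(x)·sin(2π m x) dx of log Γ on (0,1) satisfy k·b_{kn} = b_n + log k/(π n). -/

import Mathlib

open Real

section aux
open MeasureTheory Set intervalIntegral Finset


lemma intInt_log01 : IntervalIntegrable Real.log volume 0 1 := by
  rw [intervalIntegrable_iff_integrableOn_Ioc_of_le zero_le_one]
  have hfi : ∀ i : ℕ, IntegrableOn Real.log (Ioc ((1:ℝ)/(i+1)) 1) volume := by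
    intro i
    have h0 : (0:ℝ) < 1/(i+1) := by positivity
    have := intervalIntegrable_log (μ := volume) (a := (1:ℝ)/(i+1)) (b := 1)
      (notMem_uIcc_of_lt h0 one_pos)
    rwa [intervalIntegrable_iff_integrableOn_Ioc_of_le (by
      rw [div_le_one (by positivity)]; linarith [Nat.cast_nonneg (α := ℝ) i])] at this
  refine integrableOn_Ioc_of_intervalIntegral_norm_bounded_left (l := Filter.atTop) (I := 1)
    (b := 1) (a := fun i : ℕ => (1:ℝ)/(i+1)) hfi ?_ ?_
  · exact tendsto_one_div_add_atTop_nhds_zero_nat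
  · filter_upwards with i
    have h0 : (0:ℝ) < 1/(i+1) := by positivity
    have h1 : (1:ℝ)/(i+1) ≤ 1 := by
      rw [div_le_one (by positivity)]; linarith [Nat.cast_nonneg (α := ℝ) i]
    have : ∫ x in Ioc ((1:ℝ)/(i+1)) 1, ‖Real.log x‖ = ∫ x in ((1:ℝ)/(i+1))..1, -Real.log x := by
      rw [intervalIntegral.integral_of_le h1]
      refine setIntegral_congr_fun measurableSet_Ioc fun x hx => ?_
      rw [Real.norm_eq_abs, abs_of_nonpos (Real.log_nonpos (le_of_lt (lt_trans h0 hx.1)) hx.2)]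
    rw [this, intervalIntegral.integral_neg, integral_log]
    have hlog : Real.log ((1:ℝ)/(i+1)) ≤ 0 := Real.log_nonpos h0.le h1
    have := mul_nonpos_of_nonneg_of_nonpos h0.le hlog
    simp only [Real.log_one]
    nlinarith




lemma contOn_logGamma_shift : ContinuousOn (fun x : ℝ => Real.log (Real.Gamma (x + 1))) (Set.uIcc 0 1) := by
  intro x hx
  rw [Set.uIcc_of_le zero_le_one] at hx
  have hx1 : 0 < x + 1 := by linarith [hx.1]
  have hG : ContinuousAt Real.Gamma (x + 1) := by
    refine (Real.differentiableAt_Gamma fun m => ?_).continuousAt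
    have : (0:ℝ) ≤ m := Nat.cast_nonneg m
    intro h; rw [h] at hx1; linarith
  have h2 : ContinuousAt (fun x : ℝ => Real.Gamma (x + 1)) x :=
    ContinuousAt.comp (f := fun y : ℝ => y + 1) hG (by fun_prop)
  have : ContinuousAt (fun x : ℝ => Real.log (Real.Gamma (x + 1))) x :=
    ContinuousAt.comp (f := fun y : ℝ => Real.Gamma (y + 1))
      (Real.continuousAt_log (Real.Gamma_pos_of_pos hx1).ne') h2
  exact this.continuousWithinAt

lemma intInt_logGamma : IntervalIntegrable (fun x => Real.log (Real.Gamma x)) volume 0 1 := by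
  have h1 : IntervalIntegrable (fun x : ℝ => Real.log (Real.Gamma (x + 1)) - Real.log x)
      volume 0 1 := (contOn_logGamma_shift.intervalIntegrable).sub intInt_log01
  rw [intervalIntegrable_iff_integrableOn_Ioc_of_le zero_le_one] at h1 ⊢
  refine h1.congr_fun (fun x hx => ?_) measurableSet_Ioc
  have hx0 : 0 < x := hx.1
  have : Real.Gamma (x + 1) = x * Real.Gamma x := Real.Gamma_add_one hx0.ne'
  show Real.log (Real.Gamma (x + 1)) - Real.log x = Real.log (Real.Gamma x)
  rw [this, Real.log_mul hx0.ne' (Real.Gamma_pos_of_pos hx0).ne']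
  ring


lemma convexOn_comp_affine {g : ℝ → ℝ} (hg : ConvexOn ℝ (Set.Ioi 0) g) {a b : ℝ}
    (ha : 0 < a) (hb : 0 ≤ b) : ConvexOn ℝ (Set.Ioi 0) (fun s => g (a * s + b)) := by
  refine ⟨convex_Ioi 0, fun x hx y hy p q hp hq hpq => ?_⟩
  have hx' : a * x + b ∈ Set.Ioi (0:ℝ) := by
    simp only [Set.mem_Ioi] at hx ⊢; nlinarith
  have hy' : a * y + b ∈ Set.Ioi (0:ℝ) := by
    simp only [Set.mem_Ioi] at hy ⊢; nlinarith
  have h2 := hg.2 hx' hy' hp hq hpq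
  have key : a * (p • x + q • y) + b = p • (a * x + b) + q • (a * y + b) := by
    simp only [smul_eq_mul]; linear_combination -b * hpq
  simpa only [key] using h2

lemma convexOn_finset_sum {ι : Type*} (t : Finset ι) {s : Set ℝ} (hs : Convex ℝ s)
    {f : ι → ℝ → ℝ} (h : ∀ i ∈ t, ConvexOn ℝ s (f i)) :
    ConvexOn ℝ s (fun x => ∑ i ∈ t, f i x) := by
  classical
  induction t using Finset.induction with
  | empty => simpa using convexOn_const 0 hs
  | @insert i t hni ih =>
    simp only [Finset.sum_insert hni]
    exact (h i (Finset.mem_insert_self i t)).add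
      (ih fun j hj => h j (Finset.mem_insert_of_mem hj))

noncomputable def gaussP (k : ℕ) (s : ℝ) : ℝ :=
  ∏ j ∈ Finset.range k, Real.Gamma ((s + j) / k)

lemma gaussP_pos {k : ℕ} (hk : 0 < k) {s : ℝ} (hs : 0 < s) : 0 < gaussP k s := by
  refine Finset.prod_pos fun j _ => Real.Gamma_pos_of_pos ?_
  have hk' : (0:ℝ) < k := Nat.cast_pos.mpr hk
  have : (0:ℝ) ≤ j := Nat.cast_nonneg j
  positivity

noncomputable def gaussF (k : ℕ) (s : ℝ) : ℝ :=
  (k : ℝ) ^ (s - 1) * gaussP k s / gaussP k 1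

lemma gaussF_pos {k : ℕ} (hk : 0 < k) {s : ℝ} (hs : 0 < s) : 0 < gaussF k s := by
  have hk' : (0:ℝ) < k := Nat.cast_pos.mpr hk
  exact div_pos (mul_pos (Real.rpow_pos_of_pos hk' _) (gaussP_pos hk hs)) (gaussP_pos hk one_pos)

lemma gaussF_one {k : ℕ} (hk : 0 < k) : gaussF k 1 = 1 := by
  have := (gaussP_pos hk one_pos).ne'
  simp [gaussF, Real.rpow_zero, this]

lemma gaussP_add_one {k : ℕ} (hk : 0 < k) {s : ℝ} (hs : 0 < s) :
    gaussP k (s + 1) = (s / k) * gaussP k s := by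
  have hk' : (0:ℝ) < k := Nat.cast_pos.mpr hk
  have h0 : Real.Gamma (s / k) ≠ 0 := (Real.Gamma_pos_of_pos (by positivity)).ne'
  have key : ∀ j : ℕ, (s + 1 + j) / k = (s + (j + 1 : ℕ)) / k := by
    intro j; push_cast; ring
  calc gaussP k (s + 1) = ∏ j ∈ Finset.range k, Real.Gamma ((s + (j + 1 : ℕ)) / k) := by
        unfold gaussP; exact Finset.prod_congr rfl fun j _ => by rw [key j]
    _ = (∏ j ∈ Finset.range (k+1), Real.Gamma ((s + j) / k)) / Real.Gamma ((s + (0:ℕ)) / k) := by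
        rw [Finset.prod_range_succ' (fun j : ℕ => Real.Gamma ((s + j) / k)) k]
        field_simp
    _ = (gaussP k s * Real.Gamma ((s + k) / k)) / Real.Gamma (s / k) := by
        rw [Finset.prod_range_succ]; norm_num [gaussP]
    _ = (s / k) * gaussP k s := by
        have : (s + k) / k = s / k + 1 := by field_simp
        rw [this, Real.Gamma_add_one (by positivity)]
        field_simp

lemma gaussF_add_one {k : ℕ} (hk : 0 < k) {s : ℝ} (hs : 0 < s) :
    gaussF k (s + 1) = s * gaussF k s := by
  have hk' : (0:ℝ) < k := Nat.cast_pos.mpr hk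
  unfold gaussF
  rw [gaussP_add_one hk hs, show s + 1 - 1 = (s - 1) + 1 by ring,
    Real.rpow_add hk' _ _, Real.rpow_one]
  rw [show (k:ℝ) ^ (s-1) * (k:ℝ) * ((s / k) * gaussP k s)
      = s * ((k:ℝ) ^ (s-1) * gaussP k s) by field_simp]
  rw [mul_div_assoc]

lemma gaussF_logConvex {k : ℕ} (hk : 0 < k) :
    ConvexOn ℝ (Set.Ioi 0) (Real.log ∘ gaussF k) := by
  have hk' : (0:ℝ) < k := Nat.cast_pos.mpr hk
  have heq : Set.EqOn
      (fun s => ((s - 1) * Real.log k + ∑ j ∈ Finset.range k,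
        Real.log (Real.Gamma ((s + j) / k))) + -Real.log (gaussP k 1))
      (Real.log ∘ gaussF k) (Set.Ioi 0) := by
    intro s hs
    simp only [Set.mem_Ioi] at hs
    simp only [Function.comp_apply, gaussF]
    rw [Real.log_div (mul_pos (Real.rpow_pos_of_pos hk' _) (gaussP_pos hk hs)).ne'
        (gaussP_pos hk one_pos).ne',
      Real.log_mul (Real.rpow_pos_of_pos hk' _).ne' (gaussP_pos hk hs).ne',
      Real.log_rpow hk',
      show gaussP k s = ∏ j ∈ Finset.range k, Real.Gamma ((s + j) / k) from rfl,
      Real.log_prod]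
    · ring
    · intro j _
      have : (0:ℝ) ≤ j := Nat.cast_nonneg j
      exact (Real.Gamma_pos_of_pos (by positivity)).ne'
  refine ConvexOn.congr ?_ heq
  refine ConvexOn.add_const (ConvexOn.add ?_ ?_) _
  · refine ⟨convex_Ioi 0, fun x _ y _ p q hp hq hpq => le_of_eq ?_⟩
    simp only [smul_eq_mul]
    linear_combination Real.log k * hpq
  · refine convexOn_finset_sum _ (convex_Ioi 0) fun j _ => ?_
    have hb : (0:ℝ) ≤ (j:ℝ) / k := by positivity
    have ha : (0:ℝ) < 1 / (k:ℝ) := by positivity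
    have := convexOn_comp_affine Real.convexOn_log_Gamma ha hb
    refine this.congr fun s _ => ?_
    simp only [Function.comp_apply]
    congr 1
    field_simp

lemma gauss_mult {k : ℕ} (hk : 0 < k) {x : ℝ} (hx : 0 < x) :
    ∑ j ∈ Finset.range k, Real.log (Real.Gamma ((x + j) / k))
      = Real.log (Real.Gamma x) + (1 - x) * Real.log k + Real.log (gaussP k 1) := by
  have hk' : (0:ℝ) < k := Nat.cast_pos.mpr hk
  have hF := Real.eq_Gamma_of_log_convex (gaussF_logConvex hk)
    (fun {y} hy => gaussF_add_one hk hy) (fun {y} hy => gaussF_pos hk hy)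
    (gaussF_one hk) (Set.mem_Ioi.mpr hx)
  -- hF : gaussF k x = Gamma x
  have hlog := congrArg Real.log hF
  rw [show gaussF k x = (k:ℝ) ^ (x-1) * gaussP k x / gaussP k 1 from rfl,
    Real.log_div (mul_pos (Real.rpow_pos_of_pos hk' _) (gaussP_pos hk hx)).ne'
      (gaussP_pos hk one_pos).ne',
    Real.log_mul (Real.rpow_pos_of_pos hk' _).ne' (gaussP_pos hk hx).ne',
    Real.log_rpow hk',
    show gaussP k x = ∏ j ∈ Finset.range k, Real.Gamma ((x + j) / k) from rfl,
    Real.log_prod] at hlog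
  · linarith [hlog]
  · intro j _
    have : (0:ℝ) ≤ j := Nat.cast_nonneg j
    exact (Real.Gamma_pos_of_pos (by positivity)).ne'


lemma integral_sin_two_pi_n (n : ℕ) (hn : 0 < n) :
    ∫ x in (0:ℝ)..1, Real.sin (2 * π * n * x) = 0 := by
  have hc : (0:ℝ) < 2 * π * n := by positivity
  have key : ∀ x ∈ Set.uIcc (0:ℝ) 1, HasDerivAt (fun y => -Real.cos (2 * π * n * y) / (2 * π * n))
      (Real.sin (2 * π * n * x)) x := by
    intro x _
    have h1 : HasDerivAt (fun y : ℝ => 2 * π * n * y) (2 * π * n) x := by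
      simpa using (hasDerivAt_id x).const_mul (2 * π * n)
    have := (h1.cos.neg).div_const (2 * π * n)
    refine this.congr_deriv ?_
    rw [div_eq_iff hc.ne']; ring
  have hcont : Continuous fun x : ℝ => Real.sin (2 * π * n * x) := by fun_prop
  rw [intervalIntegral.integral_eq_sub_of_hasDerivAt key (hcont.intervalIntegrable 0 1)]
  have : (2:ℝ) * π * n * 1 = n * (2 * π) := by ring
  rw [this]
  simp [Real.cos_nat_mul_two_pi]

lemma integral_mul_sin_two_pi_n (n : ℕ) (hn : 0 < n) :
    ∫ x in (0:ℝ)..1, x * Real.sin (2 * π * n * x) = -(1 / (2 * π * n)) := by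
  set c : ℝ := 2 * π * n with hcdef
  have hc : (0:ℝ) < c := by positivity
  have key : ∀ x ∈ Set.uIcc (0:ℝ) 1, HasDerivAt
      (fun y => -y * Real.cos (c * y) / c + Real.sin (c * y) / c ^ 2)
      (x * Real.sin (c * x)) x := by
    intro x _
    have h1 : HasDerivAt (fun y : ℝ => c * y) c x := by
      simpa using (hasDerivAt_id x).const_mul c
    have h2 : HasDerivAt (fun y : ℝ => -y * Real.cos (c * y) / c)
        ((-1 * Real.cos (c * x) + -x * (-Real.sin (c * x) * c)) / c) x :=
      (((hasDerivAt_id x).neg.mul h1.cos).div_const c)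
    have h3 : HasDerivAt (fun y : ℝ => Real.sin (c * y) / c ^ 2)
        ((Real.cos (c * x) * c) / c ^ 2) x := h1.sin.div_const (c ^ 2)
    refine (h2.add h3).congr_deriv ?_
    rw [div_add_div _ _ hc.ne' (pow_ne_zero 2 hc.ne'), div_eq_iff (mul_ne_zero hc.ne' (pow_ne_zero 2 hc.ne'))]
    ring
  have hcont : Continuous fun x : ℝ => x * Real.sin (c * x) := by fun_prop
  rw [intervalIntegral.integral_eq_sub_of_hasDerivAt key (hcont.intervalIntegrable 0 1)]
  have h1 : c * 1 = n * (2 * π) := by rw [hcdef]; ring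
  have h0 : c * 0 = 0 := by ring
  have hsin : Real.sin ((n:ℝ) * (2 * π)) = 0 := by
    simpa using Real.sin_add_nat_mul_two_pi 0 n
  rw [h0, h1]
  simp only [Real.cos_nat_mul_two_pi, hsin, Real.sin_zero, Real.cos_zero]
  field_simp
  ring



-- integrability of shifted logGamma
lemma intInt_logGamma_shift {k j : ℕ} (hk : 0 < k) (hj : j < k) :
    IntervalIntegrable (fun u : ℝ => Real.log (Real.Gamma ((u + j) / k))) volume 0 1 := by
  have hk' : (0:ℝ) < k := Nat.cast_pos.mpr hk
  have hj' : (j:ℝ) + 1 ≤ k := by exact_mod_cast hj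
  have hj0 : (0:ℝ) ≤ j := Nat.cast_nonneg j
  have F0 : IntervalIntegrable (fun x => Real.log (Real.Gamma x)) volume ((j:ℝ)/k) (((j:ℝ)+1)/k) := by
    refine intInt_logGamma.mono_set ?_
    have hle : (j:ℝ)/k ≤ ((j:ℝ)+1)/k := by
      gcongr
      linarith
    rw [Set.uIcc_of_le (zero_le_one), Set.uIcc_of_le hle]
    exact Set.Icc_subset_Icc (by positivity) (by rw [div_le_one hk']; linarith)
  have F1 := F0.comp_add_right ((j:ℝ)/k)
  have F2 := F1.comp_mul_left (c := 1/(k:ℝ))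
  have hfun : ∀ u : ℝ, (u + j) / k = 1/(k:ℝ) * u + (j:ℝ)/k := fun u => by ring
  simp_rw [hfun]
  convert F2 using 2
  · field_simp; simp
  · field_simp; ring

end aux

open MeasureTheory Set intervalIntegral Finset in
/-- The sine Fourier coefficients `b_m := 2·∫_0^1 log Γ(x)·sin(2πmx) dx` of `log Γ` on `(0,1)`
satisfy `k·b_{kn} = b_n + log k/(πn)` for all positive integers `k`, `n`. -/
theorem logGamma_sin_fourier_coeff_rec (k n : ℕ) (hk : 0 < k) (hn : 0 < n) :
    (k : ℝ) * (2 * ∫ x in (0:ℝ)..1, Real.log (Real.Gamma x) * Real.sin (2 * π * (k * n) * x))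
      = (2 * ∫ x in (0:ℝ)..1, Real.log (Real.Gamma x) * Real.sin (2 * π * n * x))
        + Real.log k / (π * n) := by
  have hk' : (0:ℝ) < k := Nat.cast_pos.mpr hk
  have hn' : (0:ℝ) < n := Nat.cast_pos.mpr hn
  set g : ℝ → ℝ := fun x => Real.log (Real.Gamma x) * Real.sin (2 * π * (k * n) * x) with hg_def
  set L : ℝ := Real.log k with hL
  set D : ℝ := Real.log (gaussP k 1) with hD
  -- integrability of g on subintervals
  have hgint : ∀ a b : ℝ, a ∈ Set.Icc (0:ℝ) 1 → b ∈ Set.Icc (0:ℝ) 1 →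
      IntervalIntegrable g volume a b := by
    intro a b ha hb
    have : IntervalIntegrable g volume 0 1 :=
      intInt_logGamma.mul_continuousOn (Continuous.continuousOn (by fun_prop))
    refine this.mono_set ?_
    rw [Set.uIcc_of_le zero_le_one]
    exact Set.uIcc_subset_Icc ha hb
  -- point 1: sum over adjacent intervals
  have hadj : ∑ j ∈ Finset.range k, ∫ x in ((j:ℝ)/k)..(((j:ℕ)+1 : ℕ)/k : ℝ), g x
      = ∫ x in (0:ℝ)..1, g x := by
    have := intervalIntegral.sum_integral_adjacent_intervals
      (a := fun i : ℕ => (i:ℝ)/k) (n := k) (f := g) (μ := volume) ?_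
    · have h0 : ((0:ℕ):ℝ)/k = 0 := by simp
      have h1 : ((k:ℕ):ℝ)/k = 1 := by field_simp
      rw [h0, h1] at this
      rw [← this]
    · intro i hi
      have hi' : (i:ℝ) + 1 ≤ k := by exact_mod_cast hi
      refine hgint _ _ ⟨by positivity, ?_⟩ ⟨by positivity, ?_⟩
      · rw [div_le_one hk']; linarith
      · push_cast; rw [div_le_one hk']; linarith
  -- point 2: substitution in each piece
  have hsub : ∀ j : ℕ, j < k →
      (k:ℝ) * ∫ x in ((j:ℝ)/k)..(((j:ℕ)+1 : ℕ)/k : ℝ), g x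
        = ∫ u in (0:ℝ)..1, Real.log (Real.Gamma ((u + j) / k)) * Real.sin (2 * π * n * u) := by
    intro j hj
    have := intervalIntegral.integral_comp_div_add (f := g) (a := (0:ℝ)) (b := 1)
      (c := (k:ℝ)) hk'.ne' ((j:ℝ)/k)
    rw [smul_eq_mul] at this
    have h0 : (0:ℝ)/k + (j:ℝ)/k = (j:ℝ)/k := by ring
    have h1 : (1:ℝ)/k + (j:ℝ)/k = (((j:ℕ)+1 : ℕ)/k : ℝ) := by push_cast; ring
    rw [h0, h1] at this
    rw [← this]
    refine intervalIntegral.integral_congr fun u _ => ?_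
    show g (u / k + (j:ℝ)/k) = _
    have harg : u / k + (j:ℝ)/k = (u + j) / k := by ring
    rw [hg_def]
    simp only
    rw [harg]
    congr 1
    have : 2 * π * ((k:ℝ) * n) * ((u + j) / k) = 2 * π * n * u + ((n*j : ℕ) : ℝ) * (2 * π) := by
      push_cast; field_simp
    rw [this, Real.sin_add_nat_mul_two_pi]
  -- combine: k * ∫ g = ∑ ∫ shifted
  have hkey : (k:ℝ) * ∫ x in (0:ℝ)..1, g x
      = ∑ j ∈ Finset.range k, ∫ u in (0:ℝ)..1,
          Real.log (Real.Gamma ((u + j) / k)) * Real.sin (2 * π * n * u) := by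
    rw [← hadj, Finset.mul_sum]
    exact Finset.sum_congr rfl fun j hj => hsub j (Finset.mem_range.mp hj)
  -- point 3: sum inside integral
  have hswap : ∑ j ∈ Finset.range k, (∫ u in (0:ℝ)..1,
        Real.log (Real.Gamma ((u + j) / k)) * Real.sin (2 * π * n * u))
      = ∫ u in (0:ℝ)..1, (∑ j ∈ Finset.range k,
          Real.log (Real.Gamma ((u + j) / k))) * Real.sin (2 * π * n * u) := by
    rw [← intervalIntegral.integral_finset_sum]
    · refine intervalIntegral.integral_congr fun u _ => ?_
      rw [Finset.sum_mul]
    · intro j hj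
      exact (intInt_logGamma_shift hk (Finset.mem_range.mp hj)).mul_continuousOn
        (Continuous.continuousOn (by fun_prop))
  -- point 4: apply Gauss multiplication a.e.
  have hgauss : ∫ u in (0:ℝ)..1, (∑ j ∈ Finset.range k,
        Real.log (Real.Gamma ((u + j) / k))) * Real.sin (2 * π * n * u)
      = ∫ u in (0:ℝ)..1,
          (Real.log (Real.Gamma u) + (1 - u) * L + D) * Real.sin (2 * π * n * u) := by
    rw [intervalIntegral.integral_of_le zero_le_one, intervalIntegral.integral_of_le zero_le_one]
    refine setIntegral_congr_fun measurableSet_Ioc fun u hu => ?_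
    rw [gauss_mult hk hu.1]
  -- point 5: split the integral
  have hsplit : ∫ u in (0:ℝ)..1,
        (Real.log (Real.Gamma u) + (1 - u) * L + D) * Real.sin (2 * π * n * u)
      = (∫ u in (0:ℝ)..1, Real.log (Real.Gamma u) * Real.sin (2 * π * n * u)) + L / (2 * π * n) := by
    have hI1 : IntervalIntegrable
        (fun u => Real.log (Real.Gamma u) * Real.sin (2 * π * n * u)) volume 0 1 :=
      intInt_logGamma.mul_continuousOn (Continuous.continuousOn (by fun_prop))
    have hI2 : IntervalIntegrable (fun u => (L + D) * Real.sin (2 * π * n * u)) volume 0 1 :=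
      (Continuous.intervalIntegrable (by fun_prop) 0 1)
    have hI3 : IntervalIntegrable (fun u => L * (u * Real.sin (2 * π * n * u))) volume 0 1 :=
      (Continuous.intervalIntegrable (by fun_prop) 0 1)
    have e : ∀ u : ℝ, (Real.log (Real.Gamma u) + (1 - u) * L + D) * Real.sin (2 * π * n * u)
        = Real.log (Real.Gamma u) * Real.sin (2 * π * n * u)
          + ((L + D) * Real.sin (2 * π * n * u) - L * (u * Real.sin (2 * π * n * u))) := by
      intro u; ring
    simp_rw [e]
    rw [intervalIntegral.integral_add hI1 (hI2.sub hI3),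
      intervalIntegral.integral_sub hI2 hI3,
      intervalIntegral.integral_const_mul, intervalIntegral.integral_const_mul,
      integral_sin_two_pi_n n hn, integral_mul_sin_two_pi_n n hn]
    field_simp
    ring
  -- finish
  have final : (k:ℝ) * ∫ x in (0:ℝ)..1, g x
      = (∫ u in (0:ℝ)..1, Real.log (Real.Gamma u) * Real.sin (2 * π * n * u)) + L / (2 * π * n) := by
    rw [hkey, hswap, hgauss, hsplit]
  have hpin : π * (n:ℝ) ≠ 0 := by positivity
  rw [hg_def] at final ⊢
  field_simp at final ⊢
  nlinarith [final]
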